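/- arXiv:1307.4847 — 4 statements merged into one kernel-verified Lean document; each statement's English description precedes it below -/
import Mathlib

section
/- If Q is the linear span of K functions phi_1, ..., phi_K from Z to the reals, then the eluder dimension of Q is at most K. -/
/-- `z` is independent of `Z'` with respect to the function class `Q`:
there exist two functions in `Q` agreeing on `Z'` but differing at `z`. -/
def IsIndep {Z : Type*} (Q : Set (Z → ℝ)) (z : Z) (Z' : Set Z) : Prop :=
  ∃ f ∈ Q, ∃ g ∈ Q, (∀ w ∈ Z', f w = g w) ∧ f z ≠ g z

/-- A list of elements of `Z` such that every element is independent of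
its predecessors with respect to `Q`. -/
def EluderSeq {Z : Type*} (Q : Set (Z → ℝ)) (l : List Z) : Prop :=
  ∀ i : Fin l.length,
    IsIndep Q (l.get i) {w | ∃ j : Fin l.length, j < i ∧ l.get j = w}

/-- The eluder dimension of `Q`: the length of the longest sequence of
elements of `Z` each independent of its predecessors. -/
noncomputable def eluderDim {Z : Type*} (Q : Set (Z → ℝ)) : ℕ∞ :=
  sSup ((fun l : List Z => (l.length : ℕ∞)) '' {l | EluderSeq Q l})

lemma linearIndependent_of_notMem_span_pred {V : Type*} [AddCommGroup V] [Module ℝ V] :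
    ∀ (n : ℕ) (v : Fin n → V),
      (∀ i, v i ∉ Submodule.span ℝ (v '' {j | j < i})) → LinearIndependent ℝ v := by
  intro n
  induction n with
  | zero => intro v _; exact linearIndependent_empty_type
  | succ n ih =>
    intro v hv
    rw [← Fin.snoc_init_self v]
    apply linearIndependent_fin_snoc.2
    constructor
    · apply ih
      intro i hi
      apply hv i.castSucc
      refine Submodule.span_mono ?_ hi
      rintro x ⟨j, hj, rfl⟩
      exact ⟨j.castSucc, Fin.castSucc_lt_castSucc_iff.2 hj, rfl⟩
    · intro h
      apply hv (Fin.last n)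
      refine Submodule.span_mono ?_ h
      rintro x ⟨j, rfl⟩
      exact ⟨j.castSucc, j.castSucc_lt_last, rfl⟩

theorem eluderDim_span_le {Z : Type*} (K : ℕ) (φ : Fin K → Z → ℝ) :
    eluderDim ((Submodule.span ℝ (Set.range φ) : Submodule ℝ (Z → ℝ)) : Set (Z → ℝ))
      ≤ (K : ℕ∞) := by
  apply sSup_le
  rintro x ⟨l, hl, rfl⟩
  simp only [Nat.cast_le]
  set v : Fin l.length → (Fin K → ℝ) := fun i k => φ k (l.get i) with hv
  have hindep : ∀ i, v i ∉ Submodule.span ℝ (v '' {j | j < i}) := by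
    intro i hi
    obtain ⟨f, hf, g, hg, hagree, hne⟩ := hl i
    have hmem : f - g ∈ Submodule.span ℝ (Set.range φ) :=
      Submodule.sub_mem _ hf hg
    obtain ⟨c, hc⟩ := (Submodule.mem_span_range_iff_exists_fun ℝ).1 hmem
    let L : (Fin K → ℝ) →ₗ[ℝ] ℝ :=
      { toFun := fun x => ∑ k, c k * x k
        map_add' := by intro x y; simp [mul_add, Finset.sum_add_distrib]
        map_smul' := by
          intro r x
          simp only [Pi.smul_apply, smul_eq_mul, RingHom.id_apply, Finset.mul_sum]
          exact Finset.sum_congr rfl fun k _ => by ring }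
    have hLv : ∀ w, L (fun k => φ k w) = f w - g w := by
      intro w
      have := congrFun hc w
      simpa [L] using this
    have hker : Submodule.span ℝ (v '' {j | j < i}) ≤ LinearMap.ker L := by
      rw [Submodule.span_le]
      rintro _ ⟨j, hj, rfl⟩
      have : L (v j) = f (l.get j) - g (l.get j) := hLv (l.get j)
      have hz : f (l.get j) = g (l.get j) := hagree _ ⟨j, hj, rfl⟩
      rw [SetLike.mem_coe, LinearMap.mem_ker, this, hz, sub_self]
    have : L (v i) = 0 := hker hi
    rw [hLv (l.get i)] at this
    exact hne (by linarith)
  have hli := linearIndependent_of_notMem_span_pred l.length v hindep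
  have := hli.fintype_card_le_finrank
  simpa [Module.finrank_fin_fun] using this
end

section
/- Let Phi be an N-by-K real matrix and let Q0 = { Phi theta : theta in R^K, ||theta||_0 <= K0 } be the set of sparse linear combinations, viewed as real-valued functions on {1,...,N}. If 2*K0 <= K, then the eluder dimension of Q0 equals the (2K0)-rank of Phi, defined as the length of the longest sequence of rows of Phi such that every row is linearly 2K0-independent of its predecessors. -/
/-- The class of functions on `Fin N` given by `K0`-sparse linear combinations
of the columns of `Φ`, i.e. `y ↦ Φ(y)ᵀ θ` with `‖θ‖₀ ≤ K0`. -/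
def SparseClass {N K : ℕ} (Φ : Matrix (Fin N) (Fin K) ℝ) (K0 : ℕ) :
    Set (Fin N → ℝ) :=
  {f | ∃ θ : Fin K → ℝ,
    (Finset.univ.filter fun i => θ i ≠ 0).card ≤ K0 ∧
    f = fun y => ∑ i, Φ y i * θ i}

/-- `v` is linearly `l`-independent of the set of vectors `S`: there is an index
set `I` of cardinality `l` such that the restriction of `v` to `I` is not in the
span of the restrictions of the elements of `S` to `I`. -/
def LinLIndepOf {K : ℕ} (l : ℕ) (v : Fin K → ℝ) (S : Set (Fin K → ℝ)) : Prop :=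
  ∃ I : Finset (Fin K), I.card = l ∧
    (fun i : {x // x ∈ I} => v i.1) ∉
      Submodule.span ℝ ((fun w : Fin K → ℝ => fun i : {x // x ∈ I} => w i.1) '' S)

/-- A sequence (list) of rows of `Φ` such that every row is linearly
`l`-independent of its predecessors. -/
def LRankSeq {N K : ℕ} (Φ : Matrix (Fin N) (Fin K) ℝ) (l : ℕ)
    (s : List (Fin N)) : Prop :=
  ∀ i : Fin s.length,
    LinLIndepOf l (Φ (s.get i)) {w | ∃ j : Fin s.length, j < i ∧ w = Φ (s.get j)}

/-- The `l`-rank of `Φ`: the length of the longest sequence of rows of `Φ`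
such that every element is linearly `l`-independent of its predecessors. -/
noncomputable def lRank {N K : ℕ} (Φ : Matrix (Fin N) (Fin K) ℝ) (l : ℕ) : ℕ∞ :=
  sSup ((fun s : List (Fin N) => (s.length : ℕ∞)) '' {s | LRankSeq Φ l s})

open Finset in
lemma isIndep_iff_linLIndepOf {N K K0 : ℕ} (Φ : Matrix (Fin N) (Fin K) ℝ)
    (h : 2 * K0 ≤ K) (z : Fin N) (Z' : Set (Fin N)) :
    IsIndep (SparseClass Φ K0) z Z' ↔ LinLIndepOf (2 * K0) (Φ z) (Φ '' Z') := by
  classical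
  constructor
  · rintro ⟨f, ⟨θ1, h1, rfl⟩, g, ⟨θ2, h2, rfl⟩, hag, hne⟩
    set θ : Fin K → ℝ := θ1 - θ2 with hθ
    have hsub : (univ.filter fun i => θ i ≠ 0) ⊆
        (univ.filter fun i => θ1 i ≠ 0) ∪ (univ.filter fun i => θ2 i ≠ 0) := by
      intro i hi
      simp only [mem_filter, mem_union, mem_univ, true_and] at *
      by_contra hc
      push_neg at hc
      exact hi (show θ1 i - θ2 i = 0 by rw [hc.1, hc.2, sub_zero])
    have hcard : (univ.filter fun i => θ i ≠ 0).card ≤ 2 * K0 := by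
      calc (univ.filter fun i => θ i ≠ 0).card
          ≤ ((univ.filter fun i => θ1 i ≠ 0) ∪ (univ.filter fun i => θ2 i ≠ 0)).card :=
            Finset.card_le_card hsub
        _ ≤ (univ.filter fun i => θ1 i ≠ 0).card + (univ.filter fun i => θ2 i ≠ 0).card :=
            Finset.card_union_le _ _
        _ ≤ K0 + K0 := add_le_add h1 h2
        _ = 2 * K0 := (two_mul K0).symm
    obtain ⟨I, hsubI, -, hIcard⟩ :=
      Finset.exists_subsuperset_card_eq (Finset.subset_univ _) hcard (by simpa using h)
    refine ⟨I, hIcard, ?_⟩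
    intro hmem
    let L : ({x // x ∈ I} → ℝ) →ₗ[ℝ] ℝ :=
      { toFun := fun u => ∑ i, u i * θ i.1
        map_add' := by intro u v; simp [add_mul, Finset.sum_add_distrib]
        map_smul' := by intro c u; simp [Finset.mul_sum, mul_assoc] }
    have hzero : ∀ i : Fin K, i ∉ I → θ i = 0 := by
      intro i hi
      by_contra hne'
      exact hi (hsubI (by simp [hne']))
    have hsum : ∀ w : Fin N,
        (∑ i : {x // x ∈ I}, Φ w i.1 * θ i.1) = ∑ i : Fin K, Φ w i * θ i := by
      intro w
      rw [Finset.sum_coe_sort I (fun i => Φ w i * θ i)]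
      exact Finset.sum_subset (Finset.subset_univ I)
        (fun i _ hi => by rw [hzero i hi, mul_zero])
    have hdiff : ∀ w : Fin N, (∑ i, Φ w i * θ i) =
        (∑ i, Φ w i * θ1 i) - (∑ i, Φ w i * θ2 i) := by
      intro w
      rw [← Finset.sum_sub_distrib]
      refine Finset.sum_congr rfl fun i _ => ?_
      simp [hθ, mul_sub]
    have hker : Submodule.span ℝ
        ((fun w : Fin K → ℝ => fun i : {x // x ∈ I} => w i.1) '' (Φ '' Z')) ≤
        LinearMap.ker L := by
      rw [Submodule.span_le]
      rintro _ ⟨_, ⟨w, hw, rfl⟩, rfl⟩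
      simp only [SetLike.mem_coe, LinearMap.mem_ker]
      show (∑ i : {x // x ∈ I}, Φ w i.1 * θ i.1) = 0
      rw [hsum w, hdiff w, sub_eq_zero]
      exact hag w hw
    have hLz : L (fun i : {x // x ∈ I} => Φ z i.1) = 0 := hker hmem
    have : (∑ i : {x // x ∈ I}, Φ z i.1 * θ i.1) = 0 := hLz
    rw [hsum z, hdiff z, sub_eq_zero] at this
    exact hne this
  · rintro ⟨I, hIcard, hnot⟩
    obtain ⟨L, hLv, hLbot⟩ := Submodule.exists_dual_map_eq_bot_of_notMem hnot inferInstance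
    set c : {x // x ∈ I} → ℝ := fun i => L (fun j => if i = j then 1 else 0) with hc
    set θ : Fin K → ℝ := fun i => if h : i ∈ I then c ⟨i, h⟩ else 0 with hθdef
    have hLsum : ∀ u : {x // x ∈ I} → ℝ, L u = ∑ i : {x // x ∈ I}, u i * θ i.1 := by
      intro u
      rw [LinearMap.pi_apply_eq_sum_univ L u]
      refine Finset.sum_congr rfl fun i _ => ?_
      rw [smul_eq_mul]
      congr 1
      simp [hθdef, hc, i.2]
    have hzero : ∀ i : Fin K, i ∉ I → θ i = 0 := fun i hi => dif_neg hi
    have hsum : ∀ w : Fin N,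
        (∑ i : Fin K, Φ w i * θ i) = L (fun i : {x // x ∈ I} => Φ w i.1) := by
      intro w
      rw [hLsum, Finset.sum_coe_sort I (fun i => Φ w i * θ i)]
      exact (Finset.sum_subset (Finset.subset_univ I)
        (fun i _ hi => by rw [hzero i hi, mul_zero])).symm
    -- split I into two halves
    obtain ⟨I1, hI1sub, hI1card⟩ := Finset.exists_subset_card_eq
      (show K0 ≤ I.card by rw [hIcard]; omega)
    set I2 : Finset (Fin K) := I \ I1 with hI2
    have hI2card : I2.card = K0 := by
      rw [hI2, Finset.card_sdiff_of_subset hI1sub, hIcard, hI1card]; omega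
    set θ1 : Fin K → ℝ := fun i => if i ∈ I1 then θ i else 0 with hθ1
    set θ2 : Fin K → ℝ := fun i => if i ∈ I2 then -θ i else 0 with hθ2
    have hθ1card : (univ.filter fun i => θ1 i ≠ 0).card ≤ K0 := by
      rw [← hI1card]
      apply Finset.card_le_card
      intro i hi
      simp only [mem_filter, mem_univ, true_and, hθ1] at hi
      by_contra hni
      simp [hni] at hi
    have hθ2card : (univ.filter fun i => θ2 i ≠ 0).card ≤ K0 := by
      rw [← hI2card]
      apply Finset.card_le_card
      intro i hi
      simp only [mem_filter, mem_univ, true_and, hθ2] at hi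
      by_contra hni
      simp [hni] at hi
    have hsplit : ∀ i : Fin K, θ1 i - θ2 i = θ i := by
      intro i
      by_cases h1 : i ∈ I1
      · have h2 : i ∉ I2 := by simp [hI2, h1]
        simp [hθ1, hθ2, h1, h2]
      · by_cases h2 : i ∈ I2
        · simp [hθ1, hθ2, h1, h2]
        · have hiI : i ∉ I := by
            intro hiI
            exact h2 (Finset.mem_sdiff.mpr ⟨hiI, h1⟩)
          simp [hθ1, hθ2, h1, h2, hzero i hiI]
    have hdiff : ∀ w : Fin N, (∑ i, Φ w i * θ1 i) - (∑ i, Φ w i * θ2 i) =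
        ∑ i, Φ w i * θ i := by
      intro w
      rw [← Finset.sum_sub_distrib]
      refine Finset.sum_congr rfl fun i _ => ?_
      rw [← mul_sub, hsplit i]
    refine ⟨fun y => ∑ i, Φ y i * θ1 i, ⟨θ1, hθ1card, rfl⟩,
      fun y => ∑ i, Φ y i * θ2 i, ⟨θ2, hθ2card, rfl⟩, ?_, ?_⟩
    · intro w hw
      have hmem : (fun i : {x // x ∈ I} => Φ w i.1) ∈ Submodule.span ℝ
          ((fun w : Fin K → ℝ => fun i : {x // x ∈ I} => w i.1) '' (Φ '' Z')) :=
        Submodule.subset_span ⟨Φ w, ⟨w, hw, rfl⟩, rfl⟩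
      have hL0 : L (fun i : {x // x ∈ I} => Φ w i.1) = 0 := by
        have := Submodule.mem_map_of_mem (f := L) hmem
        rw [hLbot] at this
        simpa using this
      show (∑ i, Φ w i * θ1 i) = ∑ i, Φ w i * θ2 i
      have h0 : (∑ i, Φ w i * θ i) = 0 := by rw [hsum w, hL0]
      have := hdiff w
      linarith
    · show (∑ i, Φ z i * θ1 i) ≠ ∑ i, Φ z i * θ2 i
      intro hEq
      apply hLv
      rw [← hsum z, ← hdiff z, hEq, sub_self]

theorem eluderDim_sparseClass_eq_lRank {N K K0 : ℕ}
    (Φ : Matrix (Fin N) (Fin K) ℝ) (h : 2 * K0 ≤ K) :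
    eluderDim (SparseClass Φ K0) = lRank Φ (2 * K0) := by
  have hset : {l : List (Fin N) | EluderSeq (SparseClass Φ K0) l} =
      {l | LRankSeq Φ (2 * K0) l} := by
    ext l
    simp only [Set.mem_setOf_eq]
    unfold EluderSeq LRankSeq
    apply forall_congr'
    intro i
    rw [isIndep_iff_linLIndepOf Φ h]
    have himg : Φ '' {w | ∃ j : Fin l.length, j < i ∧ l.get j = w} =
        {w | ∃ j : Fin l.length, j < i ∧ w = Φ (l.get j)} := by
      ext x
      constructor
      · rintro ⟨w, ⟨j, hj, rfl⟩, rfl⟩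
        exact ⟨j, hj, rfl⟩
      · rintro ⟨j, hj, rfl⟩
        exact ⟨l.get j, ⟨j, hj, rfl⟩, rfl⟩
    rw [himg]
  unfold eluderDim lRank
  rw [hset]
end

section
/- Given a point y and a finite set of points Y in {1,...,N}, y is independent of Y with respect to the sparse linear class Q0 = { Phi theta : ||theta||_0 <= K0 } if and only if the row Phi(y) is linearly 2K0-independent of the rows { Phi(y') : y' in Y }. -/
lemma sum_subtype_eq_sum_univ {K : ℕ} (I : Finset (Fin K)) (w θ : Fin K → ℝ)
    (hθ : ∀ j, j ∉ I → θ j = 0) :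
    ∑ i : {x // x ∈ I}, w i.1 * θ i.1 = ∑ j, w j * θ j := by
  rw [Finset.sum_coe_sort I (fun j => w j * θ j)]
  exact Finset.sum_subset (Finset.subset_univ I)
    (fun j _ hj => by simp [hθ j hj]) (f := fun j => w j * θ j)

theorem isIndep_sparseClass_iff_linLIndep {N K K0 : ℕ}
    (Φ : Matrix (Fin N) (Fin K) ℝ) (h : 2 * K0 ≤ K)
    (y : Fin N) (Y : Finset (Fin N)) :
    IsIndep (SparseClass Φ K0) y (↑Y : Set (Fin N))
      ↔ LinLIndepOf (2 * K0) (Φ y) {w | ∃ y' ∈ Y, w = Φ y'} := by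
  constructor
  · rintro ⟨f, ⟨θ1, hθ1, rfl⟩, g, ⟨θ2, hθ2, rfl⟩, hagree, hne⟩
    set θ : Fin K → ℝ := θ1 - θ2 with hθdef
    have hdot : ∀ w : Fin N, ∑ j, Φ w j * θ j =
        (∑ j, Φ w j * θ1 j) - ∑ j, Φ w j * θ2 j := by
      intro w
      rw [← Finset.sum_sub_distrib]
      exact Finset.sum_congr rfl fun j _ => by simp [hθdef, mul_sub]
    have hsupp : (Finset.univ.filter fun i => θ i ≠ 0) ⊆
        (Finset.univ.filter fun i => θ1 i ≠ 0) ∪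
        (Finset.univ.filter fun i => θ2 i ≠ 0) := by
      intro j hj
      simp only [Finset.mem_filter, Finset.mem_union, Finset.mem_univ, true_and] at hj ⊢
      by_contra hc
      push_neg at hc
      exact hj (by simp [hθdef, hc.1, hc.2])
    have hcard : (Finset.univ.filter fun i => θ i ≠ 0).card ≤ 2 * K0 := by
      calc (Finset.univ.filter fun i => θ i ≠ 0).card
          ≤ _ := Finset.card_le_card hsupp
        _ ≤ _ + _ := Finset.card_union_le _ _
        _ ≤ K0 + K0 := add_le_add hθ1 hθ2
        _ = 2 * K0 := (two_mul K0).symm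
    obtain ⟨I, hsubI, -, hIcard⟩ :=
      Finset.exists_subsuperset_card_eq (Finset.subset_univ _) hcard
        (by simpa using h)
    have hθI : ∀ j, j ∉ I → θ j = 0 := by
      intro j hj
      by_contra hc
      exact hj (hsubI (by simp [hc]))
    refine ⟨I, hIcard, ?_⟩
    intro hmem
    let φ : ({x // x ∈ I} → ℝ) →ₗ[ℝ] ℝ :=
      { toFun := fun w => ∑ i, w i * θ i.1
        map_add' := fun a b => by simp [add_mul, Finset.sum_add_distrib]
        map_smul' := fun c a => by simp [Finset.mul_sum, mul_assoc] }
    have hker : Submodule.span ℝ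
        ((fun w : Fin K → ℝ => fun i : {x // x ∈ I} => w i.1) ''
          {w | ∃ y' ∈ Y, w = Φ y'}) ≤ LinearMap.ker φ := by
      rw [Submodule.span_le]
      rintro - ⟨w, ⟨y', hy', rfl⟩, rfl⟩
      simp only [SetLike.mem_coe, LinearMap.mem_ker]
      show ∑ i : {x // x ∈ I}, Φ y' i.1 * θ i.1 = 0
      rw [sum_subtype_eq_sum_univ I (Φ y') θ hθI, hdot, sub_eq_zero]
      exact hagree y' hy'
    have h0 : φ (fun i : {x // x ∈ I} => Φ y i.1) = 0 := hker hmem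
    have : ∑ j, Φ y j * θ j = 0 := by
      rw [← sum_subtype_eq_sum_univ I (Φ y) θ hθI]; exact h0
    rw [hdot, sub_eq_zero] at this
    exact hne this
  · rintro ⟨I, hIcard, hv⟩
    obtain ⟨f, hf0, hfbot⟩ := Submodule.exists_dual_map_eq_bot_of_notMem hv inferInstance
    set θ : Fin K → ℝ := fun j =>
      if hj : j ∈ I then f (fun i => if (⟨j, hj⟩ : {x // x ∈ I}) = i then 1 else 0)
      else 0 with hθdef
    have hθI : ∀ j, j ∉ I → θ j = 0 := fun j hj => by simp [hθdef, hj]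
    have hkey : ∀ w : Fin K → ℝ,
        f (fun i : {x // x ∈ I} => w i.1) = ∑ j, w j * θ j := by
      intro w
      rw [← sum_subtype_eq_sum_univ I w θ hθI, LinearMap.pi_apply_eq_sum_univ f]
      refine Finset.sum_congr rfl fun i _ => ?_
      rw [smul_eq_mul]
      congr 1
      simp [hθdef, i.2]
    have hy0 : ∑ j, Φ y j * θ j ≠ 0 := by rw [← hkey]; exact hf0
    have hY0 : ∀ y' ∈ Y, ∑ j, Φ y' j * θ j = 0 := by
      intro y' hy'
      rw [← hkey]
      have hmem : (fun i : {x // x ∈ I} => Φ y' i.1) ∈ Submodule.span ℝ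
          ((fun w : Fin K → ℝ => fun i : {x // x ∈ I} => w i.1) ''
            {w | ∃ y'' ∈ Y, w = Φ y''}) :=
        Submodule.subset_span ⟨Φ y', ⟨y', hy', rfl⟩, rfl⟩
      have := Submodule.mem_map_of_mem (f := f) hmem
      rw [hfbot] at this
      simpa using this
    obtain ⟨I1, hI1sub, hI1card⟩ := Finset.exists_subset_card_eq
      (show K0 ≤ I.card by omega)
    set I2 : Finset (Fin K) := I \ I1 with hI2def
    have hI2card : I2.card = K0 := by
      rw [hI2def, Finset.card_sdiff_of_subset hI1sub, hIcard, hI1card]; omega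
    set θ1 : Fin K → ℝ := fun j => if j ∈ I1 then θ j else 0 with hθ1def
    set θ2 : Fin K → ℝ := fun j => if j ∈ I2 then -θ j else 0 with hθ2def
    have hsplit : ∀ j, θ1 j - θ2 j = θ j := by
      intro j
      by_cases h1 : j ∈ I1
      · have h2 : j ∉ I2 := by simp [hI2def, h1]
        simp [hθ1def, hθ2def, h1, h2]
      · by_cases h2 : j ∈ I2
        · simp [hθ1def, hθ2def, h1, h2]
        · have hjI : j ∉ I := fun hjI => h2 (by simp [hI2def, hjI, h1])
          simp [hθ1def, hθ2def, h1, h2, hθI j hjI]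
    have hc1 : (Finset.univ.filter fun i => θ1 i ≠ 0).card ≤ K0 := by
      rw [← hI1card]
      refine Finset.card_le_card fun j hj => ?_
      simp only [Finset.mem_filter, Finset.mem_univ, true_and, hθ1def] at hj
      by_contra hc
      exact hj (by simp [hc])
    have hc2 : (Finset.univ.filter fun i => θ2 i ≠ 0).card ≤ K0 := by
      rw [← hI2card]
      refine Finset.card_le_card fun j hj => ?_
      simp only [Finset.mem_filter, Finset.mem_univ, true_and, hθ2def] at hj
      by_contra hc
      exact hj (by simp [hc])
    have hdot : ∀ w : Fin N, (∑ j, Φ w j * θ1 j) - (∑ j, Φ w j * θ2 j) =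
        ∑ j, Φ w j * θ j := by
      intro w
      rw [← Finset.sum_sub_distrib]
      exact Finset.sum_congr rfl fun j _ => by rw [← mul_sub, hsplit]
    refine ⟨_, ⟨θ1, hc1, rfl⟩, _, ⟨θ2, hc2, rfl⟩, ?_, ?_⟩
    · intro w hw
      have := hY0 w hw
      rw [← hdot w, sub_eq_zero] at this
      exact this
    · intro hcontra
      exact hy0 (by rw [← hdot y, hcontra, sub_self])
end

section
/- If Phi is an N-by-K real matrix with 2K0 <= min(N,K) and every 2K0-by-2K0 submatrix of Phi has full rank, then the eluder dimension of the sparse linear class Q0 = { Phi theta : ||theta||_0 <= K0 } equals 2K0. -/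
/-- `Φ` is `l`-full-rank: every `l × l` submatrix has full rank, i.e. its
rows are linearly independent. -/
def LFullRank {N K : ℕ} (Φ : Matrix (Fin N) (Fin K) ℝ) (l : ℕ) : Prop :=
  ∀ (I : Finset (Fin N)) (J : Finset (Fin K)), I.card = l → J.card = l →
    LinearIndependent ℝ (fun i : {x // x ∈ I} => fun j : {x // x ∈ J} => Φ i.1 j.1)

private lemma dot_zero_of_span_top {ι κ : Type*} [Fintype ι] [Fintype κ] [DecidableEq κ]
    (v : ι → κ → ℝ) (hv : Submodule.span ℝ (Set.range v) = ⊤)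
    (θ : κ → ℝ) (h : ∀ i, ∑ j, v i j * θ j = 0) : θ = 0 := by
  have hmem : ∀ x : κ → ℝ, x ∈ Submodule.span ℝ (Set.range v) → ∑ j, x j * θ j = 0 := by
    intro x hx
    induction hx using Submodule.span_induction with
    | mem x hx => obtain ⟨i, rfl⟩ := hx; exact h i
    | zero => simp
    | add x y _ _ hx hy => simp [add_mul, Finset.sum_add_distrib, hx, hy]
    | smul a x _ hx =>
        simp only [Pi.smul_apply, smul_eq_mul, mul_assoc, ← Finset.mul_sum, hx, mul_zero]
  funext j
  have := hmem (Pi.single j 1) (by rw [hv]; trivial)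
  simpa [Pi.single_apply, ite_mul] using this

private lemma dot_surj {ι κ : Type*} [Fintype ι] [Fintype κ] [DecidableEq κ]
    (v : ι → κ → ℝ) (hv : LinearIndependent ℝ v)
    (hcard : Fintype.card ι = Fintype.card κ) (t : ι → ℝ) :
    ∃ θ : κ → ℝ, ∀ i, ∑ j, v i j * θ j = t i := by
  classical
  let L : (κ → ℝ) →ₗ[ℝ] (ι → ℝ) :=
    { toFun := fun θ i => ∑ j, v i j * θ j
      map_add' := fun a b => by
        funext i; simp [mul_add, Finset.sum_add_distrib]
      map_smul' := fun c a => by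
        funext i
        simp only [Pi.smul_apply, smul_eq_mul, RingHom.id_apply]
        rw [Finset.mul_sum]
        congr 1; funext j; ring }
  have hspan : Submodule.span ℝ (Set.range v) = ⊤ :=
    hv.span_eq_top_of_card_eq_finrank' (by rw [hcard, Module.finrank_pi])
  have hinj : Function.Injective L := by
    rw [← LinearMap.ker_eq_bot, LinearMap.ker_eq_bot']
    intro θ h0
    exact dot_zero_of_span_top v hspan θ fun i => congrFun h0 i
  have hsurj : Function.Surjective L :=
    (LinearMap.injective_iff_surjective_of_finrank_eq_finrank
      (by simp [Module.finrank_pi, hcard])).mp hinj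
  obtain ⟨θ, hθ⟩ := hsurj t
  exact ⟨θ, fun i => congrFun hθ i⟩

private lemma sum_restrict {K : ℕ} (r θ : Fin K → ℝ) (J : Finset (Fin K))
    (hθ : ∀ j ∉ J, θ j = 0) :
    ∑ j, r j * θ j = ∑ q : {x // x ∈ J}, r q.1 * θ q.1 := by
  rw [Finset.sum_coe_sort J (fun j => r j * θ j)]
  exact (Finset.sum_subset (Finset.subset_univ J)
    (fun x _ hx => by rw [hθ x hx, mul_zero])).symm


theorem eluderDim_sparseClass_eq {N K K0 : ℕ} (Φ : Matrix (Fin N) (Fin K) ℝ)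
    (h : 2 * K0 ≤ min N K) (hfull : LFullRank Φ (2 * K0)) :
    eluderDim (SparseClass Φ K0) = ((2 * K0 : ℕ) : ℕ∞) := by
  classical
  obtain ⟨hN, hK⟩ := le_min_iff.mp h
  set n := 2 * K0 with hn
  -- Upper bound: every eluder sequence has length ≤ n
  have hub : ∀ l : List (Fin N), EluderSeq (SparseClass Φ K0) l → l.length ≤ n := by
    intro l hl
    by_contra hlen
    push_neg at hlen
    set i : Fin l.length := ⟨n, hlen⟩ with hi
    obtain ⟨f, ⟨θ1, hθ1, hf⟩, g, ⟨θ2, hθ2, hg⟩, hagree, hne⟩ := hl i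
    set θ : Fin K → ℝ := θ1 - θ2 with hθdef
    have hsupp : (Finset.univ.filter fun j => θ j ≠ 0).card ≤ n := by
      have hsub : (Finset.univ.filter fun j => θ j ≠ 0) ⊆
          (Finset.univ.filter fun j => θ1 j ≠ 0) ∪ (Finset.univ.filter fun j => θ2 j ≠ 0) := by
        intro x hx
        simp only [Finset.mem_filter, Finset.mem_union, Finset.mem_univ, true_and] at hx ⊢
        by_contra hc
        push_neg at hc
        exact hx (by simp [hθdef, hc.1, hc.2])
      calc (Finset.univ.filter fun j => θ j ≠ 0).card ≤ _ := Finset.card_le_card hsub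
        _ ≤ _ + _ := Finset.card_union_le _ _
        _ ≤ K0 + K0 := add_le_add hθ1 hθ2
        _ = n := by omega
    obtain ⟨J, hJsub, -, hJ⟩ := Finset.exists_subsuperset_card_eq
      (Finset.subset_univ _) hsupp (by simpa using hK)
    have hθJ : ∀ j ∉ J, θ j = 0 := by
      intro j hj
      by_contra hc
      exact hj (hJsub (by simp [hc]))
    have hget_inj : ∀ {a b : Fin l.length}, a < b → l.get a ≠ l.get b := by
      intro a b hab heq
      obtain ⟨f', -, g', -, hagree', hne'⟩ := hl b
      exact hne' (heq ▸ hagree' (l.get a) ⟨a, hab, rfl⟩)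
    set emb : Fin n → Fin N := fun j => l.get ⟨j.1, j.2.trans hlen⟩ with hemb
    have hembinj : Function.Injective emb := by
      intro a b hab
      by_contra hab'
      rcases lt_or_gt_of_ne hab' with hlt | hlt
      · exact hget_inj (show (⟨a.1,_⟩ : Fin l.length) < ⟨b.1,_⟩ from hlt) hab
      · exact hget_inj (show (⟨b.1,_⟩ : Fin l.length) < ⟨a.1,_⟩ from hlt) hab.symm
    set I := Finset.image emb Finset.univ with hIdef
    have hI : I.card = n := by
      rw [hIdef, Finset.card_image_of_injective _ hembinj, Finset.card_univ, Fintype.card_fin]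
    have hli := hfull I J hI hJ
    have hspan := hli.span_eq_top_of_card_eq_finrank'
      (by rw [Module.finrank_pi, Fintype.card_coe, Fintype.card_coe, hI, hJ])
    have hzero : (fun q : {x // x ∈ J} => θ q.1) = 0 := by
      apply dot_zero_of_span_top _ hspan
      intro p
      have hsum : ∑ j, Φ p.1 j * θ j = 0 := by
        obtain ⟨j0, -, hj0⟩ := Finset.mem_image.mp p.2
        have hpred : f p.1 = g p.1 := by
          apply hagree
          exact ⟨⟨j0.1, j0.2.trans hlen⟩, by simp [hi, Fin.lt_def, j0.2], hj0⟩
        rw [hf, hg] at hpred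
        simp only [hθdef, Pi.sub_apply, mul_sub, Finset.sum_sub_distrib]
        exact sub_eq_zero_of_eq hpred
      rw [← hsum]
      exact (sum_restrict _ _ J hθJ).symm
    have hθ0 : θ = 0 := by
      funext j
      by_cases hj : j ∈ J
      · exact congrFun hzero ⟨j, hj⟩
      · exact hθJ j hj
    apply hne
    have h12 : θ1 = θ2 := by
      funext j
      have := congrFun hθ0 j
      simp only [hθdef, Pi.sub_apply, Pi.zero_apply] at this
      linarith
    rw [hf, hg, h12]
  -- Lower bound: an eluder sequence of length n
  have hKn : K0 ≤ n := by omega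
  set embN : Fin n → Fin N := fun j => ⟨j.1, j.2.trans_le hN⟩ with hembN
  set embK : Fin n → Fin K := fun j => ⟨j.1, j.2.trans_le hK⟩ with hembK
  have hembNinj : Function.Injective embN := fun a b hab => by
    simpa [hembN, Fin.ext_iff] using hab
  have hembKinj : Function.Injective embK := fun a b hab => by
    simpa [hembK, Fin.ext_iff] using hab
  set I := Finset.image embN Finset.univ with hIdef
  set J := Finset.image embK Finset.univ with hJdef
  have hI : I.card = n := by
    rw [hIdef, Finset.card_image_of_injective _ hembNinj, Finset.card_univ, Fintype.card_fin]
  have hJ : J.card = n := by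
    rw [hJdef, Finset.card_image_of_injective _ hembKinj, Finset.card_univ, Fintype.card_fin]
  set L : List (Fin N) := List.ofFn embN with hLdef
  have hLlen : L.length = n := by simp [hLdef]
  have hLget : ∀ (j : Fin L.length), L.get j = embN (Fin.cast hLlen j) := by
    intro j; simp [hLdef, List.get_ofFn]; rfl
  have hLmem : ∀ (j : Fin L.length), L.get j ∈ I := by
    intro j; rw [hLget]; exact Finset.mem_image_of_mem _ (Finset.mem_univ _)
  have hLseq : EluderSeq (SparseClass Φ K0) L := by
    intro i
    have hli := hfull I J hI hJ
    obtain ⟨θJv, hθJv⟩ := dot_surj (fun p : {x // x ∈ I} => fun q : {x // x ∈ J} => Φ p.1 q.1)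
      hli (by rw [Fintype.card_coe, Fintype.card_coe, hI, hJ])
      (fun p => if p.1 = L.get i then 1 else 0)
    set θ : Fin K → ℝ := fun j => if hj : j ∈ J then θJv ⟨j, hj⟩ else 0 with hθdef
    have hθJ : ∀ j ∉ J, θ j = 0 := fun j hj => by simp [hθdef, hj]
    have hdot : ∀ (w : Fin N) (hw : w ∈ I),
        ∑ j, Φ w j * θ j = if w = L.get i then 1 else 0 := by
      intro w hw
      rw [sum_restrict _ _ J hθJ]
      rw [← hθJv ⟨w, hw⟩]
      congr 1
      funext q
      simp [hθdef, q.2]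
    obtain ⟨J1, hJ1sub, hJ1⟩ := Finset.exists_subset_card_eq (show K0 ≤ J.card by omega)
    set θ1 : Fin K → ℝ := fun j => if j ∈ J1 then θ j else 0 with hθ1def
    set θ2 : Fin K → ℝ := fun j => if j ∈ J1 then 0 else -θ j with hθ2def
    have hsplit : ∀ j, θ1 j - θ2 j = θ j := by
      intro j
      by_cases hj : j ∈ J1 <;> simp [hθ1def, hθ2def, hj]
    have hc1 : (Finset.univ.filter fun j => θ1 j ≠ 0).card ≤ K0 := by
      rw [← hJ1]
      apply Finset.card_le_card
      intro x hx
      simp only [Finset.mem_filter, Finset.mem_univ, true_and] at hx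
      by_contra hc
      exact hx (by simp [hθ1def, hc])
    have hc2 : (Finset.univ.filter fun j => θ2 j ≠ 0).card ≤ K0 := by
      have hsub : (Finset.univ.filter fun j => θ2 j ≠ 0) ⊆ J \ J1 := by
        intro x hx
        simp only [Finset.mem_filter, Finset.mem_univ, true_and] at hx
        rw [Finset.mem_sdiff]
        constructor
        · by_contra hc
          exact hx (by simp [hθ2def, hθJ x hc])
        · by_contra hc
          exact hx (by simp [hθ2def, hc])
      calc _ ≤ (J \ J1).card := Finset.card_le_card hsub
        _ = J.card - J1.card := Finset.card_sdiff_of_subset hJ1sub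
        _ ≤ K0 := by omega
    refine ⟨fun y => ∑ j, Φ y j * θ1 j, ⟨θ1, hc1, rfl⟩,
      fun y => ∑ j, Φ y j * θ2 j, ⟨θ2, hc2, rfl⟩, ?_, ?_⟩
    · rintro w ⟨j, hji, rfl⟩
      have hdiff : ∑ k, Φ (L.get j) k * θ1 k - ∑ k, Φ (L.get j) k * θ2 k = 0 := by
        rw [← Finset.sum_sub_distrib]
        simp_rw [← mul_sub]
        have : ∑ k, Φ (L.get j) k * (θ1 k - θ2 k) = ∑ k, Φ (L.get j) k * θ k := by
          congr 1; funext k; rw [hsplit]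
        rw [this, hdot _ (hLmem j)]
        have hne' : L.get j ≠ L.get i := by
          rw [hLget, hLget]
          intro heq
          have h2 := hembNinj heq
          have hv : (Fin.cast hLlen j).val = (Fin.cast hLlen i).val := congrArg Fin.val h2
          simp only [Fin.coe_cast] at hv
          rw [Fin.lt_def] at hji
          omega
        rw [if_neg hne']
      linarith
    · have hdiff : ∑ k, Φ (L.get i) k * θ1 k - ∑ k, Φ (L.get i) k * θ2 k = 1 := by
        rw [← Finset.sum_sub_distrib]
        simp_rw [← mul_sub]
        have : ∑ k, Φ (L.get i) k * (θ1 k - θ2 k) = ∑ k, Φ (L.get i) k * θ k := by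
          congr 1; funext k; rw [hsplit]
        rw [this, hdot _ (hLmem i)]
        simp
      intro heq
      have heq' : ∑ k, Φ (L.get i) k * θ1 k = ∑ k, Φ (L.get i) k * θ2 k := heq
      rw [heq'] at hdiff
      simp at hdiff
  -- conclude
  apply le_antisymm
  · apply sSup_le
    rintro x ⟨l, hl, rfl⟩
    show ((l.length : ℕ∞)) ≤ (n : ℕ∞)
    exact_mod_cast hub l hl
  · exact le_sSup ⟨L, hLseq, show ((L.length : ℕ∞)) = (n : ℕ∞) by rw [hLlen]⟩
end
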